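/- For a Hermitian operator X on ℂ^2 ⊗ ℂ^2 with eigenvalues λ₁ ≤ λ₂ ≤ λ₃ ≤ λ₄, the product numerical range contains the central segment [λ₂, λ₃] of the spectrum. -/

import Mathlib

open Matrix Kronecker
open scoped Pointwise ComplexOrder

noncomputable section

/-- A product (separable) vector `x ⊗ y` in `ℂ^K ⊗ ℂ^M`. -/
def prodVec {K M : ℕ} (x : Fin K → ℂ) (y : Fin M → ℂ) : Fin K × Fin M → ℂ :=
  fun p => x p.1 * y p.2

/-- Product numerical range of an operator on `ℂ^K ⊗ ℂ^M`. -/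
def pnr {K M : ℕ} (X : Matrix (Fin K × Fin M) (Fin K × Fin M) ℂ) : Set ℂ :=
  {z | ∃ x : Fin K → ℂ, ∃ y : Fin M → ℂ,
    star x ⬝ᵥ x = 1 ∧ star y ⬝ᵥ y = 1 ∧
    star (prodVec x y) ⬝ᵥ (X *ᵥ prodVec x y) = z}

/-- Product numerical range viewed as a set of real numbers (for Hermitian operators). -/
def pnrR {K M : ℕ} (X : Matrix (Fin K × Fin M) (Fin K × Fin M) ℂ) : Set ℝ :=
  {r | ∃ x : Fin K → ℂ, ∃ y : Fin M → ℂ,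
    star x ⬝ᵥ x = 1 ∧ star y ⬝ᵥ y = 1 ∧
    star (prodVec x y) ⬝ᵥ (X *ᵥ prodVec x y) = (r : ℂ)}

/-- Standard numerical range of an operator on `ℂ^K`. -/
def nr {K : ℕ} (A : Matrix (Fin K) (Fin K) ℂ) : Set ℂ :=
  {z | ∃ ψ : Fin K → ℂ, star ψ ⬝ᵥ ψ = 1 ∧ star ψ ⬝ᵥ (A *ᵥ ψ) = z}

open Complex

lemma prodVec_smul_smul (x y : Fin 2 → ℂ) (a b : ℂ) :
    prodVec (a • x) (b • y) = (a * b) • prodVec x y := by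
  funext p
  simp only [prodVec, Pi.smul_apply, smul_eq_mul]
  ring

lemma two_two_ext {z w : Fin 2 × Fin 2 → ℂ}
    (h00 : z (0,0) = w (0,0)) (h01 : z (0,1) = w (0,1))
    (h10 : z (1,0) = w (1,0)) (h11 : z (1,1) = w (1,1)) : z = w := by
  funext p
  obtain ⟨i, j⟩ := p
  have H : ∀ i j : Fin 2, z (i, j) = w (i, j) :=
    Fin.forall_fin_two.mpr ⟨Fin.forall_fin_two.mpr ⟨h00, h01⟩,
      Fin.forall_fin_two.mpr ⟨h10, h11⟩⟩
  exact H i j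

lemma star_prodVec_dot (x y x' y' : Fin 2 → ℂ) :
    star (prodVec x y) ⬝ᵥ prodVec x' y' = (star x ⬝ᵥ x') * (star y ⬝ᵥ y') := by
  simp only [dotProduct, Fintype.sum_prod_type, Fin.sum_univ_two, prodVec, Pi.star_apply,
    star_mul']
  ring

lemma exists_prodVec_of_det (z : Fin 2 × Fin 2 → ℂ)
    (h : z (0,0) * z (1,1) = z (0,1) * z (1,0)) :
    ∃ (x y : Fin 2 → ℂ) (c : ℂ), c ≠ 0 ∧ prodVec x y = c • z := by
  by_cases h00 : z (0,0) ≠ 0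
  · refine ⟨![z (0,0), z (1,0)], ![z (0,0), z (0,1)], z (0,0), h00, two_two_ext ?_ ?_ ?_ ?_⟩ <;>
      simp only [prodVec, Matrix.cons_val_zero, Matrix.cons_val_one, Matrix.head_cons,
        Pi.smul_apply, smul_eq_mul, Fin.isValue] <;>
      first
        | ring1
        | linear_combination h
        | linear_combination -h
  · push_neg at h00
    by_cases h01 : z (0,1) ≠ 0
    · refine ⟨![z (0,1), z (1,1)], ![z (0,0), z (0,1)], z (0,1), h01, two_two_ext ?_ ?_ ?_ ?_⟩ <;>
        simp only [prodVec, Matrix.cons_val_zero, Matrix.cons_val_one, Matrix.head_cons,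
          Pi.smul_apply, smul_eq_mul, Fin.isValue] <;>
        first
          | ring1
          | linear_combination h
          | linear_combination -h
    · push_neg at h01
      refine ⟨![0, 1], ![z (1,0), z (1,1)], 1, one_ne_zero, two_two_ext ?_ ?_ ?_ ?_⟩ <;>
        simp only [prodVec, Matrix.cons_val_zero, Matrix.cons_val_one, Matrix.head_cons,
          Pi.smul_apply, smul_eq_mul, one_mul, zero_mul] <;>
        first
          | rfl
          | ring1
          | exact h00.symm
          | exact h01.symm
          | exact h00.trans h01.symm
          | simp [h00, h01]

lemma exists_root_quad (A B C : ℂ) :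
    ∃ a b : ℂ, ¬(a = 0 ∧ b = 0) ∧ A * a ^ 2 + B * (a * b) + C * b ^ 2 = 0 := by
  by_cases hA : A = 0
  · exact ⟨1, 0, by simp, by simp [hA]⟩
  · obtain ⟨s, hs⟩ := IsAlgClosed.exists_pow_nat_eq (B ^ 2 - 4 * A * C) zero_lt_two
    refine ⟨(-B + s) / (2 * A), 1, by simp, ?_⟩
    field_simp
    ring_nf
    linear_combination hs

lemma star_dot_self (x : Fin 2 → ℂ) :
    star x ⬝ᵥ x = ((normSq (x 0) + normSq (x 1) : ℝ) : ℂ) := by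
  simp only [dotProduct, Fin.sum_univ_two, Pi.star_apply, RCLike.star_def]
  push_cast
  rw [normSq_eq_conj_mul_self, normSq_eq_conj_mul_self]

lemma nsq_sum_pos {x : Fin 2 → ℂ} (hx : x ≠ 0) :
    0 < normSq (x 0) + normSq (x 1) := by
  rcases lt_or_eq_of_le (add_nonneg (normSq_nonneg _) (normSq_nonneg _) :
      (0:ℝ) ≤ normSq (x 0) + normSq (x 1)) with h | h
  · exact h
  · exfalso
    apply hx
    have h0 : normSq (x 0) = 0 := by nlinarith [normSq_nonneg (x 0), normSq_nonneg (x 1)]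
    have h1 : normSq (x 1) = 0 := by nlinarith [normSq_nonneg (x 0), normSq_nonneg (x 1)]
    exact funext (Fin.forall_fin_two.mpr ⟨normSq_eq_zero.mp h0, normSq_eq_zero.mp h1⟩)

lemma exists_unit_scale {x : Fin 2 → ℂ} (hx : x ≠ 0) :
    ∃ c : ℝ, 0 < c ∧ star (((c:ℂ) • x)) ⬝ᵥ ((c:ℂ) • x) = 1 := by
  have hp := nsq_sum_pos hx
  set n : ℝ := normSq (x 0) + normSq (x 1) with hn
  refine ⟨(Real.sqrt n)⁻¹, by positivity, ?_⟩
  have h1 : star (((((Real.sqrt n)⁻¹ : ℝ):ℂ)) • x) ⬝ᵥ ((((Real.sqrt n)⁻¹ : ℝ):ℂ) • x)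
      = ((((Real.sqrt n)⁻¹ : ℝ):ℂ)) * ((((Real.sqrt n)⁻¹ : ℝ):ℂ)) * (star x ⬝ᵥ x) := by
    rw [star_smul, smul_dotProduct, dotProduct_smul]
    simp [Complex.conj_ofReal, mul_assoc]
  rw [h1, star_dot_self, ← hn]
  have h2 : ((Real.sqrt n)⁻¹ * (Real.sqrt n)⁻¹ * n : ℝ) = 1 := by
    rw [← mul_inv, Real.mul_self_sqrt hp.le]
    field_simp
  exact_mod_cast congrArg (Complex.ofReal) h2

lemma eigen_dot {X : Matrix (Fin 2 × Fin 2) (Fin 2 × Fin 2) ℂ} (hX : X.IsHermitian)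
    (k l : Fin 2 × Fin 2) :
    star (⇑(hX.eigenvectorBasis k)) ⬝ᵥ ⇑(hX.eigenvectorBasis l)
      = if k = l then 1 else 0 := by
  have := orthonormal_iff_ite.mp hX.eigenvectorBasis.orthonormal k l
  rw [EuclideanSpace.inner_eq_star_dotProduct, dotProduct_comm] at this
  exact this

lemma exists_combo_mem_pnrR (X : Matrix (Fin 2 × Fin 2) (Fin 2 × Fin 2) ℂ)
    (hX : X.IsHermitian) (i j : Fin 2 × Fin 2) (hij : i ≠ j) :
    ∃ s : ℝ, 0 ≤ s ∧ s ≤ 1 ∧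
      s * hX.eigenvalues i + (1 - s) * hX.eigenvalues j ∈ pnrR X := by
  set u : Fin 2 × Fin 2 → ℂ := ⇑(hX.eigenvectorBasis i) with hu_def
  set w : Fin 2 × Fin 2 → ℂ := ⇑(hX.eigenvectorBasis j) with hw_def
  have huu : star u ⬝ᵥ u = 1 := by simpa using eigen_dot hX i i
  have hww : star w ⬝ᵥ w = 1 := by simpa using eigen_dot hX j j
  have huw : star u ⬝ᵥ w = 0 := by simpa [hij] using eigen_dot hX i j
  have hwu : star w ⬝ᵥ u = 0 := by simpa [hij.symm] using eigen_dot hX j i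
  have hXu : X *ᵥ u = ((hX.eigenvalues i : ℂ)) • u := by
    rw [hu_def, hX.mulVec_eigenvectorBasis i]
    funext p
    simp [Complex.real_smul]
  have hXw : X *ᵥ w = ((hX.eigenvalues j : ℂ)) • w := by
    rw [hw_def, hX.mulVec_eigenvectorBasis j]
    funext p
    simp [Complex.real_smul]
  obtain ⟨a, b, hab, hroot⟩ := exists_root_quad
      (u (0,0) * u (1,1) - u (0,1) * u (1,0))
      (u (0,0) * w (1,1) + w (0,0) * u (1,1) - u (0,1) * w (1,0) - w (0,1) * u (1,0))
      (w (0,0) * w (1,1) - w (0,1) * w (1,0))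
  have hdet : (a • u + b • w) (0,0) * (a • u + b • w) (1,1)
      = (a • u + b • w) (0,1) * (a • u + b • w) (1,0) := by
    simp only [Pi.add_apply, Pi.smul_apply, smul_eq_mul]
    linear_combination hroot
  obtain ⟨x₀, y₀, c, hc, hpz⟩ := exists_prodVec_of_det _ hdet
  have hzc : prodVec x₀ y₀ = (c * a) • u + (c * b) • w := by
    rw [hpz]
    funext p
    simp only [Pi.smul_apply, Pi.add_apply, smul_eq_mul]
    ring
  have hab' : ¬(c * a = 0 ∧ c * b = 0) := by
    rintro ⟨h1, h2⟩
    rcases mul_eq_zero.mp h1 with h | h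
    · exact hc h
    · rcases mul_eq_zero.mp h2 with h' | h'
      · exact hc h'
      · exact hab ⟨h, h'⟩
  set A : ℂ := c * a with hA_def
  set B : ℂ := c * b with hB_def
  -- dot products with u and w pick out coefficients
  have hdu : star u ⬝ᵥ prodVec x₀ y₀ = A := by
    rw [hzc, dotProduct_add, dotProduct_smul, dotProduct_smul, huu, huw]
    simp
  have hdw : star w ⬝ᵥ prodVec x₀ y₀ = B := by
    rw [hzc, dotProduct_add, dotProduct_smul, dotProduct_smul, hww, hwu]
    simp
  have hpz_ne : prodVec x₀ y₀ ≠ 0 := by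
    intro h0
    apply hab'
    constructor
    · rw [← hdu, h0]; simp
    · rw [← hdw, h0]; simp
  have hx₀ : x₀ ≠ 0 := by
    rintro rfl
    apply hpz_ne
    funext p
    simp [prodVec]
  have hy₀ : y₀ ≠ 0 := by
    rintro rfl
    apply hpz_ne
    funext p
    simp [prodVec]
  -- Rayleigh numerator and denominator
  have hstarz : star (prodVec x₀ y₀) = (starRingEnd ℂ A) • star u + (starRingEnd ℂ B) • star w := by
    rw [hzc, star_add, star_smul, star_smul]
    rfl
  have hdot_self : star (prodVec x₀ y₀) ⬝ᵥ prodVec x₀ y₀ = ((normSq A + normSq B : ℝ) : ℂ) := by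
    rw [hstarz, hzc]
    simp only [add_dotProduct, dotProduct_add, smul_dotProduct, dotProduct_smul, huu, hww, huw,
      hwu, smul_eq_mul, mul_one, mul_zero, add_zero, zero_add]
    push_cast
    rw [normSq_eq_conj_mul_self, normSq_eq_conj_mul_self]
    ring
  have hdot_X : star (prodVec x₀ y₀) ⬝ᵥ (X *ᵥ prodVec x₀ y₀)
      = ((normSq A * hX.eigenvalues i + normSq B * hX.eigenvalues j : ℝ) : ℂ) := by
    rw [hstarz, hzc, mulVec_add, mulVec_smul, mulVec_smul, hXu, hXw]
    simp only [add_dotProduct, dotProduct_add, smul_dotProduct, dotProduct_smul, huu, hww, huw,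
      hwu, smul_eq_mul, mul_one, mul_zero, add_zero, zero_add]
    push_cast
    rw [normSq_eq_conj_mul_self, normSq_eq_conj_mul_self]
    ring
  set n : ℝ := normSq A + normSq B with hn_def
  have hn_pos : 0 < n := by
    rcases lt_or_eq_of_le (add_nonneg (normSq_nonneg A) (normSq_nonneg B) : (0:ℝ) ≤ n) with h | h
    · exact h
    · exfalso
      apply hab'
      have h0 : normSq A = 0 := by nlinarith [normSq_nonneg A, normSq_nonneg B]
      have h1 : normSq B = 0 := by nlinarith [normSq_nonneg A, normSq_nonneg B]
      exact ⟨normSq_eq_zero.mp h0, normSq_eq_zero.mp h1⟩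
  obtain ⟨cx, hcx_pos, hx_unit⟩ := exists_unit_scale hx₀
  obtain ⟨cy, hcy_pos, hy_unit⟩ := exists_unit_scale hy₀
  set k : ℝ := cx * cy with hk_def
  have hpv : prodVec ((cx:ℂ) • x₀) ((cy:ℂ) • y₀) = ((k:ℝ):ℂ) • prodVec x₀ y₀ := by
    rw [prodVec_smul_smul, hk_def]
    push_cast
    ring_nf
  -- the normalized product vector has unit norm, giving k^2 * n = 1
  have hk_eq : (k:ℝ)^2 * n = 1 := by
    have h1 : star (prodVec ((cx:ℂ) • x₀) ((cy:ℂ) • y₀)) ⬝ᵥ prodVec ((cx:ℂ) • x₀) ((cy:ℂ) • y₀)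
        = 1 := by
      rw [star_prodVec_dot, hx_unit, hy_unit, one_mul]
    rw [hpv] at h1
    rw [star_smul, smul_dotProduct, dotProduct_smul, hdot_self] at h1
    have h2 : ((k^2 * n : ℝ) : ℂ) = 1 := by
      push_cast
      rw [← h1]
      simp [Complex.conj_ofReal]
      ring
    exact_mod_cast h2
  refine ⟨normSq A / n, div_nonneg (normSq_nonneg A) hn_pos.le,
    (div_le_one hn_pos).mpr (by nlinarith [normSq_nonneg B]), ?_⟩
  refine ⟨(cx:ℂ) • x₀, (cy:ℂ) • y₀, hx_unit, hy_unit, ?_⟩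
  rw [hpv, star_smul, smul_dotProduct, mulVec_smul, dotProduct_smul, hdot_X]
  have hval : (k:ℝ)^2 * (normSq A * hX.eigenvalues i + normSq B * hX.eigenvalues j)
      = normSq A / n * hX.eigenvalues i + (1 - normSq A / n) * hX.eigenvalues j := by
    have hk2 : (k:ℝ)^2 = n⁻¹ := by
      field_simp at hk_eq ⊢
      linarith
    rw [hk2]
    have : (1 - normSq A / n) = normSq B / n := by
      field_simp
      linarith [hn_def]
    rw [this]
    field_simp
    try ring
  rw [← hval]
  push_cast
  ring_nf
  try simp [Complex.conj_ofReal]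
  try ring

lemma quad_real {X : Matrix (Fin 2 × Fin 2) (Fin 2 × Fin 2) ℂ} (hX : X.IsHermitian)
    (z : Fin 2 × Fin 2 → ℂ) :
    star (star z ⬝ᵥ (X *ᵥ z)) = star z ⬝ᵥ (X *ᵥ z) := by
  conv_lhs => rw [← star_star z]
  rw [← star_dotProduct_star, star_mulVec, hX.eq, ← dotProduct_mulVec]
  simp

lemma norm_one_iff (v : EuclideanSpace ℂ (Fin 2)) :
    v ∈ Metric.sphere (0 : EuclideanSpace ℂ (Fin 2)) 1 ↔
      star ((WithLp.equiv 2 (Fin 2 → ℂ)) v) ⬝ᵥ ((WithLp.equiv 2 (Fin 2 → ℂ)) v) = 1 := by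
  rw [Metric.mem_sphere, dist_zero_right]
  rw [WithLp.equiv_apply, dotProduct_comm, ← EuclideanSpace.inner_eq_star_dotProduct,
    inner_self_eq_norm_sq_to_K]
  constructor
  · intro h
    rw [h]
    norm_num
  · intro h
    have h2 : ((‖v‖ ^ 2 : ℝ) : ℂ) = ((1 : ℝ) : ℂ) := by push_cast; exact h
    have h3 : (‖v‖ ^ 2 : ℝ) = 1 := Complex.ofReal_injective h2
    nlinarith [norm_nonneg v]

lemma pnrR_eq_image (X : Matrix (Fin 2 × Fin 2) (Fin 2 × Fin 2) ℂ) (hX : X.IsHermitian) :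
    pnrR X = (fun p : EuclideanSpace ℂ (Fin 2) × EuclideanSpace ℂ (Fin 2) =>
        (star (prodVec ((WithLp.equiv 2 (Fin 2 → ℂ)) p.1) ((WithLp.equiv 2 (Fin 2 → ℂ)) p.2)) ⬝ᵥ
          (X *ᵥ prodVec ((WithLp.equiv 2 (Fin 2 → ℂ)) p.1)
            ((WithLp.equiv 2 (Fin 2 → ℂ)) p.2))).re) ''
      (Metric.sphere 0 1 ×ˢ Metric.sphere 0 1) := by
  ext r
  constructor
  · rintro ⟨x, y, hx, hy, hval⟩
    refine ⟨((WithLp.equiv 2 (Fin 2 → ℂ)).symm x, (WithLp.equiv 2 (Fin 2 → ℂ)).symm y), ?_, ?_⟩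
    · constructor
      · exact (norm_one_iff _).mpr (by simpa using hx)
      · exact (norm_one_iff _).mpr (by simpa using hy)
    · simp only [Equiv.apply_symm_apply]
      rw [hval, Complex.ofReal_re]
  · rintro ⟨⟨v, w⟩, ⟨hv, hw⟩, hval⟩
    refine ⟨(WithLp.equiv 2 (Fin 2 → ℂ)) v, (WithLp.equiv 2 (Fin 2 → ℂ)) w,
      (norm_one_iff _).mp hv, (norm_one_iff _).mp hw, ?_⟩
    set z := prodVec ((WithLp.equiv 2 (Fin 2 → ℂ)) v) ((WithLp.equiv 2 (Fin 2 → ℂ)) w)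
    have hreal := quad_real hX z
    rw [← hval]
    exact (Complex.conj_eq_iff_re.mp hreal).symm

lemma pnrR_ordConnected (X : Matrix (Fin 2 × Fin 2) (Fin 2 × Fin 2) ℂ) (hX : X.IsHermitian) :
    (pnrR X).OrdConnected := by
  rw [pnrR_eq_image X hX]
  apply IsPreconnected.ordConnected
  apply IsPreconnected.image
  · have hrank : 1 < Module.rank ℝ (EuclideanSpace ℂ (Fin 2)) := by
      have h4 : Module.finrank ℝ (EuclideanSpace ℂ (Fin 2)) = 4 := by
        rw [← Module.finrank_mul_finrank ℝ ℂ (EuclideanSpace ℂ (Fin 2))]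
        simp [Complex.finrank_real_complex]
      have := Module.finrank_eq_rank ℝ (EuclideanSpace ℂ (Fin 2))
      rw [h4] at this
      rw [← this]
      norm_num
    exact ((isConnected_sphere hrank 0 one_pos.le).prod
      (isConnected_sphere hrank 0 one_pos.le)).isPreconnected
  · apply Continuous.continuousOn
    apply Complex.continuous_re.comp
    simp only [dotProduct, mulVec, prodVec, Pi.star_apply, star_mul', WithLp.equiv_apply]
    fun_prop


/-- For a two-qubit Hermitian operator with ordered eigenvalues
`μ 0 ≤ μ 1 ≤ μ 2 ≤ μ 3`, the product numerical range contains the central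
segment `[μ 1, μ 2]` of the spectrum. -/
theorem pnrR_two_qubit_contains_central_segment
    (X : Matrix (Fin 2 × Fin 2) (Fin 2 × Fin 2) ℂ) (hX : X.IsHermitian)
    (μ : Fin 4 → ℝ) (hmono : Monotone μ) (e : Fin 4 ≃ Fin 2 × Fin 2)
    (heig : ∀ i, μ i = hX.eigenvalues (e i)) :
    Set.Icc (μ 1) (μ 2) ⊆ pnrR X := by
  intro t ht
  obtain ⟨ht1, ht2⟩ := ht
  obtain ⟨s₁, hs₁0, hs₁1, h₁⟩ :=
    exists_combo_mem_pnrR X hX (e 0) (e 1) (e.injective.ne (by decide))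
  obtain ⟨s₂, hs₂0, hs₂1, h₂⟩ :=
    exists_combo_mem_pnrR X hX (e 3) (e 2) (e.injective.ne (by decide))
  rw [← heig 0, ← heig 1] at h₁
  rw [← heig 3, ← heig 2] at h₂
  have h01 : μ 0 ≤ μ 1 := hmono (by decide)
  have h23 : μ 2 ≤ μ 3 := hmono (by decide)
  have hle1 : s₁ * μ 0 + (1 - s₁) * μ 1 ≤ μ 1 := by nlinarith
  have hge2 : μ 2 ≤ s₂ * μ 3 + (1 - s₂) * μ 2 := by nlinarith
  exact (pnrR_ordConnected X hX).out h₁ h₂ ⟨by linarith, by linarith⟩
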